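/- forb(m, F_2) = ⌊m²/4⌋ + m + 1, where F_2 is the 3×4 matrix with rows (1,1,0,0), (1,0,1,0), (0,1,0,1). -/

import Mathlib

/-- A (0,1)-matrix (entries as `Bool`) is simple if it has no repeated columns. -/
def Simple {α β : Type*} (A : α → β → Bool) : Prop :=
  Function.Injective fun j i => A i j

/-- `F` is a configuration in `A`: some submatrix of `A` is a row and column
permutation of `F`. -/
def IsConfig {α β γ δ : Type*} (F : α → β → Bool) (A : γ → δ → Bool) : Prop :=
  ∃ (r : α ↪ γ) (c : β ↪ δ), ∀ i j, F i j = A (r i) (c j)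

/-- `F₂`, the 3×4 matrix with rows (1,1,0,0), (1,0,1,0), (0,1,0,1). -/
def F2 : Fin 3 → Fin 4 → Bool :=
  ![![true, true, false, false], ![true, false, true, false], ![false, true, false, true]]

open Finset

def HasF2N (𝒜 : Finset (Finset ℕ)) : Prop :=
  ∃ a b c : ℕ, a ≠ b ∧ a ≠ c ∧ b ≠ c ∧
    (∃ S ∈ 𝒜, a ∈ S ∧ b ∈ S ∧ c ∉ S) ∧
    (∃ S ∈ 𝒜, a ∈ S ∧ b ∉ S ∧ c ∈ S) ∧
    (∃ S ∈ 𝒜, a ∉ S ∧ b ∈ S ∧ c ∉ S) ∧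
    (∃ S ∈ 𝒜, a ∉ S ∧ b ∉ S ∧ c ∈ S)

def Brow (𝒜 : Finset (Finset ℕ)) (r : ℕ) : Finset (Finset ℕ) :=
  𝒜.filter fun S => r ∉ S ∧ insert r S ∈ 𝒜

def Sig (V : Finset ℕ) (𝒜 : Finset (Finset ℕ)) (r : ℕ) : Finset ℕ :=
  V.filter fun s => (∃ T ∈ Brow 𝒜 r, s ∈ T) ∧ (∃ T ∈ Brow 𝒜 r, s ∉ T)

lemma chainB {𝒜 : Finset (Finset ℕ)} (h : ¬ HasF2N 𝒜) (r : ℕ) :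
    ∀ T1 ∈ Brow 𝒜 r, ∀ T2 ∈ Brow 𝒜 r, T1 ⊆ T2 ∨ T2 ⊆ T1 := by
  intro T1 h1 T2 h2
  by_contra hc
  push_neg at hc
  obtain ⟨hn1, hn2⟩ := hc
  obtain ⟨b, hb1, hb2⟩ := not_subset.1 hn1
  obtain ⟨c, hc1, hc2⟩ := not_subset.1 hn2
  simp only [Brow, mem_filter] at h1 h2
  obtain ⟨hA1, hr1, hi1⟩ := h1
  obtain ⟨hA2, hr2, hi2⟩ := h2
  have hbr : b ≠ r := fun e => hr1 (e ▸ hb1)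
  have hcr : c ≠ r := fun e => hr2 (e ▸ hc1)
  exact h ⟨r, b, c, fun e => hbr e.symm, fun e => hcr e.symm,
    fun e => hb2 (e ▸ hc1),
    ⟨insert r T1, hi1, mem_insert_self r T1, mem_insert_of_mem hb1,
      fun hm => ((mem_insert.1 hm).elim (fun e => hcr e) hc2)⟩,
    ⟨insert r T2, hi2, mem_insert_self r T2,
      fun hm => ((mem_insert.1 hm).elim (fun e => hbr e) hb2),
      mem_insert_of_mem hc1⟩,
    ⟨T1, hA1, hr1, hb1, hc2⟩,
    ⟨T2, hA2, hr2, hb2, hc1⟩⟩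

lemma exists_mem_mem {𝒜 : Finset (Finset ℕ)} (h : ¬ HasF2N 𝒜) (r : ℕ) {x y : ℕ}
    (hx : ∃ T ∈ Brow 𝒜 r, x ∈ T) (hy : ∃ T ∈ Brow 𝒜 r, y ∈ T) :
    ∃ T ∈ Brow 𝒜 r, x ∈ T ∧ y ∈ T := by
  obtain ⟨Tx, hTx, hxx⟩ := hx
  obtain ⟨Ty, hTy, hyy⟩ := hy
  rcases chainB h r Tx hTx Ty hTy with hsub | hsub
  · exact ⟨Ty, hTy, hsub hxx, hyy⟩
  · exact ⟨Tx, hTx, hxx, hsub hyy⟩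

lemma exists_not_not {𝒜 : Finset (Finset ℕ)} (h : ¬ HasF2N 𝒜) (r : ℕ) {x y : ℕ}
    (hx : ∃ T ∈ Brow 𝒜 r, x ∉ T) (hy : ∃ T ∈ Brow 𝒜 r, y ∉ T) :
    ∃ T ∈ Brow 𝒜 r, x ∉ T ∧ y ∉ T := by
  obtain ⟨Tx, hTx, hxx⟩ := hx
  obtain ⟨Ty, hTy, hyy⟩ := hy
  rcases chainB h r Tx hTx Ty hTy with hsub | hsub
  · exact ⟨Tx, hTx, hxx, fun hm => hyy (hsub hm)⟩
  · exact ⟨Ty, hTy, fun hm => hxx (hsub hm), hyy⟩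

lemma brow_mem_ne {𝒜 : Finset (Finset ℕ)} {r x : ℕ}
    (hx : ∃ T ∈ Brow 𝒜 r, x ∈ T) : x ≠ r := by
  obtain ⟨T, hT, hxT⟩ := hx
  simp only [Brow, mem_filter] at hT
  exact fun e => hT.2.1 (e ▸ hxT)

lemma double_pair_disjoint {V : Finset ℕ} {𝒜 : Finset (Finset ℕ)} (h : ¬ HasF2N 𝒜)
    {r s : ℕ}
    (h1 : ∃ T ∈ Brow 𝒜 r, s ∈ T) (h2 : ∃ T ∈ Brow 𝒜 r, s ∉ T)
    (h3 : ∃ T ∈ Brow 𝒜 s, r ∈ T) (h4 : ∃ T ∈ Brow 𝒜 s, r ∉ T) :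
    Disjoint (Sig V 𝒜 r) (Sig V 𝒜 s) := by
  have hsr : s ≠ r := brow_mem_ne h1
  rw [Finset.disjoint_left]
  intro a haR haS
  simp only [Sig, mem_filter] at haR haS
  obtain ⟨-, haR1, haR2⟩ := haR
  obtain ⟨-, haS1, haS2⟩ := haS
  have har : a ≠ r := brow_mem_ne haR1
  have has : a ≠ s := brow_mem_ne haS1
  obtain ⟨X, hX, hsX, haX⟩ := exists_mem_mem h r h1 haR1
  obtain ⟨Y, hY, hrY, haY⟩ := exists_mem_mem h s h3 haS1
  obtain ⟨X', hX', hsX', haX'⟩ := exists_not_not h r h2 haR2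
  obtain ⟨Y', hY', hrY', haY'⟩ := exists_not_not h s h4 haS2
  simp only [Brow, mem_filter] at hX hY hX' hY'
  refine h ⟨a, r, s, har, has, fun e => hsr e.symm,
    ⟨Y, hY.1, haY, hrY, hY.2.1⟩,
    ⟨X, hX.1, haX, hX.2.1, hsX⟩,
    ⟨insert r X', hX'.2.2, ?_, mem_insert_self r X', ?_⟩,
    ⟨insert s Y', hY'.2.2, ?_, ?_, mem_insert_self s Y'⟩⟩
  · exact fun hm => ((mem_insert.1 hm).elim har haX')
  · exact fun hm => ((mem_insert.1 hm).elim hsr hsX')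
  · exact fun hm => ((mem_insert.1 hm).elim has haY')
  · exact fun hm => ((mem_insert.1 hm).elim (fun e => hsr e.symm) hrY')

lemma card_Brow_le {V : Finset ℕ} {𝒜 : Finset (Finset ℕ)}
    (hsub : ∀ S ∈ 𝒜, S ⊆ V) (h : ¬ HasF2N 𝒜) (r : ℕ) :
    (Brow 𝒜 r).card ≤ (Sig V 𝒜 r).card + 1 := by
  classical
  have key : ∀ S1 ∈ Brow 𝒜 r, ∀ S2 ∈ Brow 𝒜 r, S1 ⊆ S2 → S1 ≠ S2 →
      ((S1 ∩ Sig V 𝒜 r).card ≠ (S2 ∩ Sig V 𝒜 r).card) := by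
    intro S1 hS1 S2 hS2 hss hne
    obtain ⟨x, hx2, hx1⟩ := exists_of_ssubset (ssubset_of_subset_of_ne hss hne)
    have hxSig : x ∈ Sig V 𝒜 r := by
      simp only [Sig, mem_filter]
      have hS2' : S2 ∈ 𝒜 := (mem_filter.1 hS2).1
      exact ⟨hsub S2 hS2' hx2, ⟨S2, hS2, hx2⟩, ⟨S1, hS1, hx1⟩⟩
    have hlt : S1 ∩ Sig V 𝒜 r ⊂ S2 ∩ Sig V 𝒜 r := by
      refine ⟨inter_subset_inter hss (Finset.Subset.refl _), fun hsup => ?_⟩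
      exact hx1 (mem_of_mem_inter_left (hsup (mem_inter.2 ⟨hx2, hxSig⟩)))
    exact Nat.ne_of_lt (Finset.card_lt_card hlt)
  have hr : (Brow 𝒜 r).card ≤ (Finset.range ((Sig V 𝒜 r).card + 1)).card := by
    apply Finset.card_le_card_of_injOn (fun T => (T ∩ Sig V 𝒜 r).card)
    · intro T hT
      simp only [Finset.mem_coe, mem_range, Nat.lt_succ_iff]
      exact Finset.card_le_card (inter_subset_right : T ∩ Sig V 𝒜 r ⊆ Sig V 𝒜 r)
    · intro T1 h1 T2 h2 he
      simp only at he
      rw [Finset.mem_coe] at h1 h2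
      by_contra hne
      rcases chainB h r T1 h1 T2 h2 with hss | hss
      · exact key T1 h1 T2 h2 hss hne he
      · exact key T2 h2 T1 h1 hss (Ne.symm hne) he.symm
  simpa using hr

lemma exists_good_row {V : Finset ℕ} {𝒜 : Finset (Finset ℕ)}
    (hsub : ∀ S ∈ 𝒜, S ⊆ V) (h : ¬ HasF2N 𝒜) (hV : 0 < V.card) :
    ∃ r ∈ V, (Brow 𝒜 r).card ≤ V.card / 2 + 1 := by
  classical
  by_contra hcon
  push_neg at hcon
  have hσ : ∀ r ∈ V, V.card / 2 + 1 ≤ (Sig V 𝒜 r).card := by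
    intro r hr
    have h1 := card_Brow_le hsub h r
    have h2 := hcon r hr
    omega
  have hdouble : ∃ r ∈ V, ∃ s ∈ V, s ∈ Sig V 𝒜 r ∧ r ∈ Sig V 𝒜 s := by
    by_contra hd
    push_neg at hd
    set E := V.sigma (fun r => Sig V 𝒜 r) with hE
    have hcardE : V.card * (V.card / 2 + 1) ≤ E.card := by
      rw [hE, Finset.card_sigma]
      calc V.card * (V.card / 2 + 1) = V.card • (V.card / 2 + 1) := by
            simp [smul_eq_mul]
        _ ≤ ∑ r ∈ V, (Sig V 𝒜 r).card := Finset.card_nsmul_le_sum V _ _ hσ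
    set I1 := E.image (fun p => (p.1, p.2)) with hI1
    set I2 := E.image (fun p => (p.2, p.1)) with hI2
    have hc1 : I1.card = E.card := by
      apply Finset.card_image_of_injOn
      intro p _ q _ hpq
      simp only [Prod.mk.injEq] at hpq
      exact Sigma.ext hpq.1 (heq_of_eq hpq.2)
    have hc2 : I2.card = E.card := by
      apply Finset.card_image_of_injOn
      intro p _ q _ hpq
      simp only [Prod.mk.injEq] at hpq
      exact Sigma.ext hpq.2 (heq_of_eq hpq.1)
    have hdisj : Disjoint I1 I2 := by
      rw [Finset.disjoint_left]
      intro p hp1 hp2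
      simp only [hI1, hI2, hE, Finset.mem_image, Finset.mem_sigma] at hp1 hp2
      obtain ⟨q1, ⟨hq1V, hq1S⟩, hq1e⟩ := hp1
      obtain ⟨q2, ⟨hq2V, hq2S⟩, hq2e⟩ := hp2
      have e1 : q1.1 = p.1 := congrArg Prod.fst hq1e
      have e2 : q1.2 = p.2 := congrArg Prod.snd hq1e
      have e3 : q2.2 = p.1 := congrArg Prod.fst hq2e
      have e4 : q2.1 = p.2 := congrArg Prod.snd hq2e
      exact hd p.1 (e1 ▸ hq1V) p.2 (e4 ▸ hq2V) (e2 ▸ e1 ▸ hq1S) (e3 ▸ e4 ▸ hq2S)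
    have hsubU : I1 ∪ I2 ⊆ V ×ˢ V := by
      intro p hp
      rcases Finset.mem_union.1 hp with hp | hp <;>
        simp only [hI1, hI2, hE, Finset.mem_image, Finset.mem_sigma] at hp <;>
        obtain ⟨q, ⟨hqV, hqS⟩, hqe⟩ := hp <;>
        rw [Finset.mem_product] <;>
        have hqS' : q.2 ∈ V := (Finset.mem_filter.1 hqS).1
      · exact hqe ▸ ⟨hqV, hqS'⟩
      · exact hqe ▸ ⟨hqS', hqV⟩
    have hcards : 2 * E.card ≤ V.card * V.card := by
      have := Finset.card_le_card hsubU
      rw [Finset.card_union_of_disjoint hdisj, hc1, hc2, Finset.card_product] at this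
      omega
    have hfin : V.card * (2 * (V.card / 2 + 1)) ≤ V.card * V.card := by
      calc V.card * (2 * (V.card / 2 + 1)) = 2 * (V.card * (V.card / 2 + 1)) := by ring
        _ ≤ 2 * E.card := by omega
        _ ≤ V.card * V.card := hcards
    have := Nat.le_of_mul_le_mul_left hfin hV
    omega
  obtain ⟨r, hrV, s, hsV, hsr, hrs⟩ := hdouble
  have hsr' := Finset.mem_filter.1 hsr
  have hrs' := Finset.mem_filter.1 hrs
  have hdisj := double_pair_disjoint (V := V) h hsr'.2.1 hsr'.2.2 hrs'.2.1 hrs'.2.2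
  have hU : (Sig V 𝒜 r).card + (Sig V 𝒜 s).card ≤ V.card := by
    rw [← Finset.card_union_of_disjoint hdisj]
    exact Finset.card_le_card (Finset.union_subset (filter_subset _ _) (filter_subset _ _))
  have := hσ r hrV
  have := hσ s hsV
  omega

lemma arith1 {m : ℕ} (hm : 1 ≤ m) :
    (m - 1) ^ 2 / 4 + (m - 1) + 1 + (m / 2 + 1) ≤ m ^ 2 / 4 + m + 1 := by
  obtain ⟨q, hq | hq⟩ := Nat.even_or_odd' m
  · subst hq
    obtain ⟨q', rfl⟩ : ∃ q', q = q' + 1 := ⟨q - 1, by omega⟩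
    have h1 : (2 * (q' + 1) - 1) ^ 2 = 4 * (q' * q') + 4 * q' + 1 := by
      have e : 2 * (q' + 1) - 1 = 2 * q' + 1 := by omega
      rw [e]; ring
    have h2 : (2 * (q' + 1)) ^ 2 = 4 * (q' * q') + 8 * q' + 4 := by ring
    omega
  · subst hq
    have h1 : (2 * q + 1 - 1) ^ 2 = 4 * (q * q) := by
      have e : 2 * q + 1 - 1 = 2 * q := by omega
      rw [e]; ring
    have h2 : (2 * q + 1) ^ 2 = 4 * (q * q) + 4 * q + 1 := by ring
    omega

lemma hasF2N_image_erase {𝒜 : Finset (Finset ℕ)} (r : ℕ)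
    (h : HasF2N (𝒜.image (fun S => S.erase r))) : HasF2N 𝒜 := by
  classical
  obtain ⟨a, b, c, hab, hac, hbc, ⟨S1, hS1, p1⟩, ⟨S2, hS2, p2⟩, ⟨S3, hS3, p3⟩,
    ⟨S4, hS4, p4⟩⟩ := h
  obtain ⟨T1, hT1, rfl⟩ := Finset.mem_image.1 hS1
  obtain ⟨T2, hT2, rfl⟩ := Finset.mem_image.1 hS2
  obtain ⟨T3, hT3, rfl⟩ := Finset.mem_image.1 hS3
  obtain ⟨T4, hT4, rfl⟩ := Finset.mem_image.1 hS4
  have har : a ≠ r := (Finset.mem_erase.1 p1.1).1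
  have hbr : b ≠ r := (Finset.mem_erase.1 p1.2.1).1
  have hcr : c ≠ r := (Finset.mem_erase.1 p2.2.2).1
  refine ⟨a, b, c, hab, hac, hbc,
    ⟨T1, hT1, (Finset.mem_erase.1 p1.1).2, (Finset.mem_erase.1 p1.2.1).2,
      fun hm => p1.2.2 (Finset.mem_erase.2 ⟨hcr, hm⟩)⟩,
    ⟨T2, hT2, (Finset.mem_erase.1 p2.1).2,
      fun hm => p2.2.1 (Finset.mem_erase.2 ⟨hbr, hm⟩), (Finset.mem_erase.1 p2.2.2).2⟩,
    ⟨T3, hT3, fun hm => p3.1 (Finset.mem_erase.2 ⟨har, hm⟩),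
      (Finset.mem_erase.1 p3.2.1).2, fun hm => p3.2.2 (Finset.mem_erase.2 ⟨hcr, hm⟩)⟩,
    ⟨T4, hT4, fun hm => p4.1 (Finset.mem_erase.2 ⟨har, hm⟩),
      fun hm => p4.2.1 (Finset.mem_erase.2 ⟨hbr, hm⟩), (Finset.mem_erase.1 p4.2.2).2⟩⟩

lemma card_le_erase (𝒜 : Finset (Finset ℕ)) (r : ℕ) :
    𝒜.card ≤ (𝒜.image (fun S => S.erase r)).card + (Brow 𝒜 r).card := by
  classical
  set 𝒜' := 𝒜.image (fun S => S.erase r) with h𝒜'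
  set target := (𝒜' ×ˢ ({false} : Finset Bool)) ∪ ((Brow 𝒜 r) ×ˢ ({true} : Finset Bool))
    with htarget
  have hmain : 𝒜.card ≤ target.card := by
    apply Finset.card_le_card_of_injOn
      (fun S => (S.erase r, decide (r ∈ S ∧ S.erase r ∈ 𝒜)))
    · intro S hS
      by_cases hc : r ∈ S ∧ S.erase r ∈ 𝒜
      · simp only [htarget, Finset.mem_coe, Finset.mem_union, Finset.mem_product, Finset.mem_singleton]
        right
        refine ⟨?_, by simp [hc]⟩
        simp only [Brow, Finset.mem_filter]
        exact ⟨hc.2, Finset.notMem_erase r S, by rw [Finset.insert_erase hc.1]; exact hS⟩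
      · simp only [htarget, Finset.mem_coe, Finset.mem_union, Finset.mem_product, Finset.mem_singleton]
        left
        exact ⟨Finset.mem_image_of_mem _ hS, by simp [hc]⟩
    · intro S1 h1 S2 h2 he
      rw [Finset.mem_coe] at h1 h2
      simp only [Prod.mk.injEq] at he
      obtain ⟨hee, hflag⟩ := he
      by_cases hr1 : r ∈ S1 <;> by_cases hr2 : r ∈ S2
      · rw [← Finset.insert_erase hr1, ← Finset.insert_erase hr2, hee]
      · exfalso
        have hS2e : S2.erase r = S2 := Finset.erase_eq_of_notMem hr2
        have : S1.erase r ∈ 𝒜 := by rw [hee, hS2e]; exact h2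
        simp [hr1, hr2, this] at hflag
      · exfalso
        have hS1e : S1.erase r = S1 := Finset.erase_eq_of_notMem hr1
        have : S2.erase r ∈ 𝒜 := by rw [← hee, hS1e]; exact h1
        simp [hr1, hr2, this] at hflag
      · rw [← Finset.erase_eq_of_notMem hr1, ← Finset.erase_eq_of_notMem hr2, hee]
  calc 𝒜.card ≤ target.card := hmain
    _ ≤ (𝒜' ×ˢ ({false} : Finset Bool)).card + ((Brow 𝒜 r) ×ˢ ({true} : Finset Bool)).card :=
        Finset.card_union_le _ _
    _ = 𝒜'.card + (Brow 𝒜 r).card := by simp [Finset.card_product]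

theorem familyBound : ∀ (V : Finset ℕ) (𝒜 : Finset (Finset ℕ)),
    (∀ S ∈ 𝒜, S ⊆ V) → ¬ HasF2N 𝒜 → 𝒜.card ≤ V.card ^ 2 / 4 + V.card + 1 := by
  intro V
  induction V using Finset.strongInduction with
  | _ V ih =>
    intro 𝒜 hsub hF2
    rcases V.eq_empty_or_nonempty with rfl | hne
    · have hsing : 𝒜 ⊆ {∅} := by
        intro S hS
        rw [Finset.mem_singleton]
        exact Finset.subset_empty.1 (hsub S hS)
      have := Finset.card_le_card hsing
      simp only [Finset.card_singleton] at this
      simpa using this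
    · have hV : 0 < V.card := Finset.card_pos.2 hne
      obtain ⟨r, hrV, hBr⟩ := exists_good_row hsub hF2 hV
      set 𝒜' := 𝒜.image (fun S => S.erase r) with h𝒜'
      have hsub' : ∀ S ∈ 𝒜', S ⊆ V.erase r := by
        intro S hS
        obtain ⟨T, hT, rfl⟩ := Finset.mem_image.1 hS
        exact Finset.erase_subset_erase r (hsub T hT)
      have hrec := ih (V.erase r) (Finset.erase_ssubset hrV) 𝒜' hsub'
        (fun hh => hF2 (hasF2N_image_erase r hh))
      have hcard := card_le_erase 𝒜 r
      have hVc : (V.erase r).card = V.card - 1 := Finset.card_erase_of_mem hrV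
      rw [← h𝒜'] at hcard
      rw [hVc] at hrec
      have := arith1 hV
      omega

lemma arith2 (m : ℕ) : m ^ 2 / 4 + m + 1 = (m / 2 + 1) * (m - m / 2 + 1) := by
  obtain ⟨q, hq | hq⟩ := Nat.even_or_odd' m
  · subst hq
    have h0 : 2 * q / 2 = q := by omega
    have h2 : (2 * q) ^ 2 = 4 * (q * q) := by ring
    rw [h0, h2]
    have h1 : 2 * q - q = q := by omega
    rw [h1]
    have h3 : (q + 1) * (q + 1) = q * q + 2 * q + 1 := by ring
    rw [h3]
    omega
  · subst hq
    have h0 : (2 * q + 1) / 2 = q := by omega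
    have h2 : (2 * q + 1) ^ 2 = 4 * (q * q + q) + 1 := by ring
    rw [h0, h2]
    have h1 : 2 * q + 1 - q = q + 1 := by omega
    rw [h1]
    have h3 : (q + 1) * (q + 1 + 1) = (q * q + q) + (2 * q + 1) + 1 := by ring
    rw [h3]
    omega

def lowA (m : ℕ) : Fin m → Fin (m ^ 2 / 4 + m + 1) → Bool :=
  fun x j =>
    if x.val < m / 2 then decide (x.val < j.val / (m - m / 2 + 1))
    else decide (x.val - m / 2 < j.val % (m - m / 2 + 1))

lemma lowA_simple (m : ℕ) : Simple (lowA m) := by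
  intro j1 j2 hcols
  have hcols' : ∀ x, lowA m x j1 = lowA m x j2 := fun x => congrFun hcols x
  have hbound : ∀ j : Fin (m ^ 2 / 4 + m + 1), j.val < (m / 2 + 1) * (m - m / 2 + 1) :=
    fun j => Nat.lt_of_lt_of_le j.isLt (le_of_eq (arith2 m))
  have hw0 : 0 < m - m / 2 + 1 := by omega
  have auxd : ∀ p q : Fin (m ^ 2 / 4 + m + 1), (∀ x, lowA m x p = lowA m x q) →
      p.val / (m - m / 2 + 1) < q.val / (m - m / 2 + 1) → False := by
    intro p q hpq hlt
    have hq : q.val / (m - m / 2 + 1) < m / 2 + 1 :=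
      (Nat.div_lt_iff_lt_mul hw0).2 (hbound q)
    have hx : p.val / (m - m / 2 + 1) < m := by omega
    have hthis := hpq ⟨p.val / (m - m / 2 + 1), hx⟩
    simp only [lowA] at hthis
    have hxk : p.val / (m - m / 2 + 1) < m / 2 := by omega
    rw [if_pos hxk, if_pos hxk] at hthis
    simp only [decide_eq_decide] at hthis
    omega
  have auxe : ∀ p q : Fin (m ^ 2 / 4 + m + 1), (∀ x, lowA m x p = lowA m x q) →
      p.val % (m - m / 2 + 1) < q.val % (m - m / 2 + 1) → False := by
    intro p q hpq hlt
    have hq : q.val % (m - m / 2 + 1) < m - m / 2 + 1 := Nat.mod_lt _ hw0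
    have hx : m / 2 + p.val % (m - m / 2 + 1) < m := by omega
    have hthis := hpq ⟨m / 2 + p.val % (m - m / 2 + 1), hx⟩
    simp only [lowA] at hthis
    have hxk : ¬ (m / 2 + p.val % (m - m / 2 + 1) < m / 2) := by omega
    rw [if_neg hxk, if_neg hxk] at hthis
    simp only [decide_eq_decide] at hthis
    omega
  have hd : j1.val / (m - m / 2 + 1) = j2.val / (m - m / 2 + 1) := by
    rcases Nat.lt_trichotomy (j1.val / (m - m / 2 + 1)) (j2.val / (m - m / 2 + 1))
      with h | h | h
    · exact absurd h (fun h => auxd j1 j2 hcols' h)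
    · exact h
    · exact absurd h (fun h => auxd j2 j1 (fun x => (hcols' x).symm) h)
  have he : j1.val % (m - m / 2 + 1) = j2.val % (m - m / 2 + 1) := by
    rcases Nat.lt_trichotomy (j1.val % (m - m / 2 + 1)) (j2.val % (m - m / 2 + 1))
      with h | h | h
    · exact absurd h (fun h => auxe j1 j2 hcols' h)
    · exact h
    · exact absurd h (fun h => auxe j2 j1 (fun x => (hcols' x).symm) h)
  apply Fin.ext
  have e1 := Nat.div_add_mod j1.val (m - m / 2 + 1)
  have e2 := Nat.div_add_mod j2.val (m - m / 2 + 1)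
  rw [hd, he] at e1
  omega

def posm (m : ℕ) (x : Fin m) : ℕ := if x.val < m / 2 then x.val else x.val - m / 2

def blkm (m : ℕ) (x : Fin m) : Bool := decide (m / 2 ≤ x.val)

def thrm (m : ℕ) (y : Fin (m ^ 2 / 4 + m + 1)) (b : Bool) : ℕ :=
  if b then y.val % (m - m / 2 + 1) else y.val / (m - m / 2 + 1)

lemma lowA_eq (m : ℕ) (x : Fin m) (y : Fin (m ^ 2 / 4 + m + 1)) :
    lowA m x y = decide (posm m x < thrm m y (blkm m x)) := by
  by_cases hx : x.val < m / 2
  · have hb : blkm m x = false := by simp [blkm]; omega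
    simp [lowA, posm, thrm, hb, hx]
  · have hb : blkm m x = true := by simp [blkm]; omega
    simp [lowA, posm, thrm, hb, hx]

lemma lowA_avoid (m : ℕ) : ¬ IsConfig F2 (lowA m) := by
  rintro ⟨r, c, hrc⟩
  have fact : ∀ (i : Fin 3) (j : Fin 4),
      (F2 i j = true → posm m (r i) < thrm m (c j) (blkm m (r i))) ∧
      (F2 i j = false → ¬ (posm m (r i) < thrm m (c j) (blkm m (r i)))) := by
    intro i j
    have h := hrc i j
    rw [lowA_eq] at h
    constructor
    · intro hT; rw [hT] at h; exact of_decide_eq_true h.symm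
    · intro hF; rw [hF] at h; exact of_decide_eq_false h.symm
  have F00 : F2 0 0 = true := by decide
  have F01 : F2 0 1 = true := by decide
  have F02 : F2 0 2 = false := by decide
  have F03 : F2 0 3 = false := by decide
  have F10 : F2 1 0 = true := by decide
  have F11 : F2 1 1 = false := by decide
  have F12 : F2 1 2 = true := by decide
  have F13 : F2 1 3 = false := by decide
  have F20 : F2 2 0 = false := by decide
  have F21 : F2 2 1 = true := by decide
  have F22 : F2 2 2 = false := by decide
  have F23 : F2 2 3 = true := by decide
  have hblk : blkm m (r 1) ≠ blkm m (r 2) := by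
    intro hβ
    have h10 := (fact 1 0).1 F10
    have h20 := (fact 2 0).2 F20
    have h11 := (fact 1 1).2 F11
    have h21 := (fact 2 1).1 F21
    rw [hβ] at h10 h11
    omega
  rcases Bool.eq_or_eq_not (blkm m (r 0)) (blkm m (r 1)) with hβ | hβ
  · -- blk x0 = blk x1
    have h02 := (fact 0 2).2 F02
    have h12 := (fact 1 2).1 F12
    have h01 := (fact 0 1).1 F01
    have h11 := (fact 1 1).2 F11
    rw [hβ] at h02 h01
    omega
  · -- then blk x0 = blk x2
    have hβ2 : blkm m (r 0) = blkm m (r 2) := by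
      rcases Bool.eq_false_or_eq_true (blkm m (r 1)) with h1 | h1 <;>
        rcases Bool.eq_false_or_eq_true (blkm m (r 2)) with h2 | h2 <;>
        simp_all
    have h03 := (fact 0 3).2 F03
    have h23 := (fact 2 3).1 F23
    have h00 := (fact 0 0).1 F00
    have h20 := (fact 2 0).2 F20
    rw [hβ2] at h03 h00
    omega

theorem stmt5_aux (m : ℕ) :
    IsGreatest {n : ℕ | ∃ A : Fin m → Fin n → Bool, Simple A ∧ ¬ IsConfig F2 A}
      (m ^ 2 / 4 + m + 1) := by
  classical
  constructor
  · exact ⟨lowA m, lowA_simple m, lowA_avoid m⟩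
  · rintro n ⟨A, hSimple, hConf⟩
    set Scol : Fin n → Finset ℕ :=
      fun j => ((univ : Finset (Fin m)).filter (fun i => A i j = true)).image Fin.val
      with hScol
    have memS : ∀ (i : Fin m) (j : Fin n), i.val ∈ Scol j ↔ A i j = true := by
      intro i j
      simp only [hScol, Finset.mem_image, Finset.mem_filter, Finset.mem_univ, true_and]
      constructor
      · rintro ⟨i', hi', he⟩
        rwa [Fin.val_injective he] at hi'
      · intro h
        exact ⟨i, h, rfl⟩
    have memlt : ∀ (x : ℕ) (j : Fin n), x ∈ Scol j → x < m := by
      intro x j hx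
      simp only [hScol, Finset.mem_image, Finset.mem_filter] at hx
      obtain ⟨i, -, rfl⟩ := hx
      exact i.isLt
    have hScol_inj : Function.Injective Scol := by
      intro j1 j2 he
      apply hSimple
      funext i
      have h1 := memS i j1
      have h2 := memS i j2
      rw [he] at h1
      simp only
      cases hx1 : A i j1 <;> cases hx2 : A i j2
      · rfl
      · exact absurd (h1.1 (h2.2 hx2)) (by simp [hx1])
      · exact absurd (h2.1 (h1.2 hx1)) (by simp [hx2])
      · rfl
    have hNoF2 : ¬ HasF2N ((univ : Finset (Fin n)).image Scol) := by
      rintro ⟨a, b, c, hab, hac, hbc, ⟨S1, hS1, p1⟩, ⟨S2, hS2, p2⟩, ⟨S3, hS3, p3⟩,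
        ⟨S4, hS4, p4⟩⟩
      obtain ⟨j1, -, rfl⟩ := Finset.mem_image.1 hS1
      obtain ⟨j2, -, rfl⟩ := Finset.mem_image.1 hS2
      obtain ⟨j3, -, rfl⟩ := Finset.mem_image.1 hS3
      obtain ⟨j4, -, rfl⟩ := Finset.mem_image.1 hS4
      have ham : a < m := memlt a j1 p1.1
      have hbm : b < m := memlt b j1 p1.2.1
      have hcm : c < m := memlt c j2 p2.2.2
      set ra : Fin m := ⟨a, ham⟩
      set rb : Fin m := ⟨b, hbm⟩
      set rc : Fin m := ⟨c, hcm⟩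
      have pos : ∀ (x : Fin m) (j : Fin n), x.val ∈ Scol j → A x j = true :=
        fun x j h => (memS x j).1 h
      have neg : ∀ (x : Fin m) (j : Fin n), x.val ∉ Scol j → A x j = false := by
        intro x j h
        cases h' : A x j
        · rfl
        · exact absurd ((memS x j).2 h') h
      have e00 : A ra j1 = true := pos ra j1 p1.1
      have e01 : A ra j2 = true := pos ra j2 p2.1
      have e02 : A ra j3 = false := neg ra j3 p3.1
      have e03 : A ra j4 = false := neg ra j4 p4.1
      have e10 : A rb j1 = true := pos rb j1 p1.2.1
      have e11 : A rb j2 = false := neg rb j2 p2.2.1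
      have e12 : A rb j3 = true := pos rb j3 p3.2.1
      have e13 : A rb j4 = false := neg rb j4 p4.2.1
      have e20 : A rc j1 = false := neg rc j1 p1.2.2
      have e21 : A rc j2 = true := pos rc j2 p2.2.2
      have e22 : A rc j3 = false := neg rc j3 p3.2.2
      have e23 : A rc j4 = true := pos rc j4 p4.2.2
      have hj12 : j1 ≠ j2 := fun e => p2.2.1 (e ▸ p1.2.1)
      have hj13 : j1 ≠ j3 := fun e => p3.1 (e ▸ p1.1)
      have hj14 : j1 ≠ j4 := fun e => p4.2.1 (e ▸ p1.2.1)
      have hj23 : j2 ≠ j3 := fun e => p3.1 (e ▸ p2.1)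
      have hj24 : j2 ≠ j4 := fun e => p4.1 (e ▸ p2.1)
      have hj34 : j3 ≠ j4 := fun e => p4.2.1 (e ▸ p3.2.1)
      have hra : ra.val = a := rfl
      have hrb : rb.val = b := rfl
      have hrc : rc.val = c := rfl
      apply hConf
      have hvab : ra.val ≠ rb.val := hab
      have hvac : ra.val ≠ rc.val := hac
      have hvbc : rb.val ≠ rc.val := hbc
      have hrinj : Function.Injective ![ra, rb, rc] := by
        intro u v huv
        fin_cases u <;> fin_cases v <;> simp [Fin.ext_iff] at huv ⊢ <;> omega
      have hcinj : Function.Injective ![j1, j2, j3, j4] := by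
        intro u v huv
        fin_cases u <;> fin_cases v <;> simp at huv ⊢ <;> simp [huv] at hj12 hj13 hj14 hj23 hj24 hj34
      refine ⟨⟨![ra, rb, rc], hrinj⟩, ⟨![j1, j2, j3, j4], hcinj⟩, ?_⟩
      intro i j
      fin_cases i <;> fin_cases j <;>
        simp [F2] <;>
        first
          | exact e00 | exact e01 | exact e02 | exact e03
          | exact e10 | exact e11 | exact e12 | exact e13
          | exact e20 | exact e21 | exact e22 | exact e23
    have hsub : ∀ S ∈ (univ : Finset (Fin n)).image Scol, S ⊆ Finset.range m := by
      intro S hS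
      obtain ⟨j, -, rfl⟩ := Finset.mem_image.1 hS
      intro x hx
      exact Finset.mem_range.2 (memlt x j hx)
    have hcard : ((univ : Finset (Fin n)).image Scol).card = n := by
      rw [Finset.card_image_of_injective _ hScol_inj, Finset.card_univ, Fintype.card_fin]
    have := familyBound (Finset.range m) ((univ : Finset (Fin n)).image Scol) hsub hNoF2
    rwa [hcard, Finset.card_range] at this

/-- `forb(m, F₂) = ⌊m²/4⌋ + m + 1`. -/
theorem stmt5 (m : ℕ) :
    IsGreatest {n : ℕ | ∃ A : Fin m → Fin n → Bool, Simple A ∧ ¬ IsConfig F2 A}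
      (m ^ 2 / 4 + m + 1) :=
  stmt5_aux m
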